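/- Let 0 < θ < 1, c₁ > 0, c₂ < 0, c₃ ∈ ℝ and h(x) = c₁ x^θ + c₂ log x + c₃. Let D = 2/(c₁ 2^{θ-1} θ), L₁ = ((-3c₂)/(c₁θ))^{1/θ}, L₃ = D^{1/θ}. Then for all x ≥ max{L₁, L₃}, one has h(x + D x^{1-θ}) - h(x) ≥ 4/3. -/

import Mathlib

theorem h_increment_ge (θ c₁ c₂ c₃ : ℝ) (hθ0 : 0 < θ) (hθ1 : θ < 1)
    (hc₁ : 0 < c₁) (hc₂ : c₂ < 0) (D L₁ L₃ : ℝ)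
    (hD : D = 2 / (c₁ * 2 ^ (θ - 1) * θ))
    (hL₁ : L₁ = ((-3 * c₂) / (c₁ * θ)) ^ (1 / θ))
    (hL₃ : L₃ = D ^ (1 / θ))
    (x : ℝ) (hx : x ≥ max L₁ L₃) :
    (c₁ * (x + D * x ^ (1 - θ)) ^ θ + c₂ * Real.log (x + D * x ^ (1 - θ)) + c₃) -
      (c₁ * x ^ θ + c₂ * Real.log x + c₃) ≥ 4 / 3 := by
  have h2p : (0:ℝ) < (2:ℝ) ^ (θ - 1) := Real.rpow_pos_of_pos two_pos _
  have hden : 0 < c₁ * 2 ^ (θ - 1) * θ := by positivity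
  have hD0 : 0 < D := by rw [hD]; positivity
  have hxL1 : L₁ ≤ x := le_trans (le_max_left _ _) hx
  have hxL3 : L₃ ≤ x := le_trans (le_max_right _ _) hx
  have hx0 : 0 < x := lt_of_lt_of_le (by rw [hL₃]; positivity) hxL3
  -- D ≤ x ^ θ
  have hDxθ : D ≤ x ^ θ := by
    have := Real.rpow_le_rpow (by rw [hL₃]; positivity) hxL3 hθ0.le
    rwa [hL₃, one_div, Real.rpow_inv_rpow hD0.le hθ0.ne'] at this
  -- -3 c₂ ≤ c₁ θ x^θ, and for all t ≥ x
  have hL1bound : ∀ t : ℝ, x ≤ t → -3 * c₂ ≤ c₁ * θ * t ^ θ := by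
    intro t ht
    have hb : (0:ℝ) ≤ (-3 * c₂) / (c₁ * θ) := by
      apply div_nonneg <;> nlinarith
    have := Real.rpow_le_rpow (by rw [hL₁]; positivity) (hxL1.trans ht) hθ0.le
    rw [hL₁, one_div, Real.rpow_inv_rpow hb hθ0.ne'] at this
    rw [div_le_iff₀ (by positivity)] at this
    nlinarith
  set y : ℝ := x + D * x ^ (1 - θ) with hy
  have hxpow : (0:ℝ) < x ^ (1 - θ) := Real.rpow_pos_of_pos hx0 _
  have hxy : x < y := by simp only [hy]; nlinarith
  have hy2x : y ≤ 2 * x := by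
    have : D * x ^ (1 - θ) ≤ x ^ θ * x ^ (1 - θ) := by nlinarith
    rw [← Real.rpow_add hx0] at this
    simp only [add_sub_cancel, Real.rpow_one] at this
    simp only [hy]; linarith
  set K : ℝ := 2 / 3 * (c₁ * θ * (2 ^ (θ - 1) * x ^ (θ - 1))) with hK
  set G : ℝ → ℝ := fun t => c₁ * t ^ θ + c₂ * Real.log t + c₃ - K * t with hG
  -- derivative of G for t > 0
  have hderiv : ∀ t : ℝ, 0 < t →
      HasDerivAt G (c₁ * (θ * t ^ (θ - 1)) + c₂ * t⁻¹ - K) t := by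
    intro t ht
    have h1 : HasDerivAt (fun s : ℝ => s ^ θ) (θ * t ^ (θ - 1)) t :=
      Real.hasDerivAt_rpow_const (Or.inl ht.ne')
    have h2 : HasDerivAt Real.log t⁻¹ t := Real.hasDerivAt_log ht.ne'
    have h3 : HasDerivAt (fun s : ℝ => K * s) K t := by
      simpa using (hasDerivAt_id t).const_mul K
    exact (((h1.const_mul c₁).add (h2.const_mul c₂)).add_const c₃).sub h3
  have hmono : MonotoneOn G (Set.Icc x y) := by
    apply monotoneOn_of_deriv_nonneg (convex_Icc x y)
    · intro t ht
      exact ((hderiv t (hx0.trans_le ht.1)).continuousAt).continuousWithinAt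
    · intro t ht
      rw [interior_Icc] at ht
      exact (hderiv t (hx0.trans ht.1)).differentiableAt.differentiableWithinAt
    · intro t ht
      rw [interior_Icc] at ht
      have ht0 : 0 < t := hx0.trans ht.1
      rw [(hderiv t ht0).deriv]
      have htpow : (0:ℝ) < t ^ (θ - 1) := Real.rpow_pos_of_pos ht0 _
      -- c₂ * t⁻¹ ≥ -(1/3) c₁ θ t^(θ-1)
      have h1 : -3 * c₂ ≤ c₁ * θ * t ^ θ := hL1bound t ht.1.le
      have htθ : t ^ θ = t ^ (θ - 1) * t := by
        rw [← Real.rpow_add_one ht0.ne']; ring_nf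
      have hlog : -(1/3) * (c₁ * θ * t ^ (θ - 1)) ≤ c₂ * t⁻¹ := by
        rw [ge_iff_le, ← sub_nonneg] at *
        have ht' : t⁻¹ > 0 := inv_pos.mpr ht0
        have : c₂ * t⁻¹ + 1/3 * (c₁ * θ * t ^ (θ - 1)) =
            (c₁ * θ * t ^ θ + 3 * c₂) * (t⁻¹ / 3) := by
          rw [htθ]; field_simp; ring
        nlinarith
      -- t^(θ-1) ≥ (2x)^(θ-1) = 2^(θ-1) x^(θ-1)
      have h2x : (2 * x) ^ (θ - 1) ≤ t ^ (θ - 1) := by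
        apply Real.rpow_le_rpow_of_nonpos ht0 (ht.2.le.trans hy2x) (by linarith)
      rw [Real.mul_rpow (by norm_num) hx0.le] at h2x
      have : K ≤ 2/3 * (c₁ * θ * t ^ (θ - 1)) := by
        rw [hK]
        have : c₁ * θ * (2 ^ (θ-1) * x ^ (θ-1)) ≤ c₁ * θ * t ^ (θ-1) := by
          apply mul_le_mul_of_nonneg_left h2x (by positivity)
        linarith
      nlinarith
  have hGle : G x ≤ G y := hmono (Set.left_mem_Icc.mpr hxy.le) (Set.right_mem_Icc.mpr hxy.le) hxy.le
  -- K * (y - x) = 4/3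
  have hKval : K * (y - x) = 4 / 3 := by
    have hyx : y - x = D * x ^ (1 - θ) := by simp [hy]
    have hxx : x ^ (θ - 1) * x ^ (1 - θ) = 1 := by
      rw [← Real.rpow_add hx0]; norm_num
    have hDval : c₁ * 2 ^ (θ - 1) * θ * D = 2 := by
      rw [hD]; field_simp
    calc K * (y - x) = 2/3 * (c₁ * 2 ^ (θ-1) * θ * D) * (x ^ (θ-1) * x ^ (1-θ)) := by
          rw [hyx, hK]; ring
      _ = 4 / 3 := by rw [hDval, hxx]; norm_num
  have hKyx : K * y - K * x = 4 / 3 := by rw [← mul_sub]; exact hKval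
  simp only [hG] at hGle
  clear_value G
  clear_value K
  clear_value y
  linarith
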